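/- Discrete L∞-H¹ estimate on the volume fractions: if (c, μ) is a solution of the one-step scheme such that 0 < c_{i,K} < 1 for every K ∈ V and i ∈ {1,2}, then Σ_{{K,L} ∈ E} τ_{KL} (c_{1,K} − c_{1,L})² ≤ (2/α) ( E(c⁰) + Σ_{i=1,2} Σ_{K ∈ V} m_K |Ψ_{i,K}| ). -/

import Mathlib

open Finset

/-- Logarithmic-mean edge value: `lm a b = a` if `a = b ≥ 0`, `0` if `min a b ≤ 0`,
and `(a - b)/(log a - log b)` otherwise. -/
noncomputable def lm (a b : ℝ) : ℝ :=
  if a = b ∧ 0 ≤ a then a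
  else if min a b ≤ 0 then 0
  else (a - b) / (Real.log a - Real.log b)

/-- Entropy function `H(c) = c log c - c + 1` (note `H 0 = 1` since `Real.log 0 = 0`). -/
noncomputable def ent (c : ℝ) : ℝ := c * Real.log c - c + 1

/-- Sum of `f L` over the neighbours `L` of `K`, i.e. over the `L` with `(K, L) ∈ E`. -/
noncomputable def nbrSum {V : Type*} [Fintype V] [DecidableEq V]
    (E : Finset (V × V)) (K : V) (f : V → ℝ) : ℝ :=
  ∑ L ∈ Finset.univ.filter (fun L => (K, L) ∈ E), f L

/-- Sum of a symmetric quantity `f K L` over the unordered edges `{K, L}`, where the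
edge set `E` is recorded as a symmetric finset of ordered pairs: each unordered edge
appears as both `(K, L)` and `(L, K)`, whence the division by `2`. -/
noncomputable def edgeSum {V : Type*} (E : Finset (V × V)) (f : V → V → ℝ) : ℝ :=
  (∑ p ∈ E, f p.1 p.2) / 2

/-- The one-step finite-volume scheme: equations (i) for both phases, (ii), (iii), (iv). -/
def OneStepScheme {V : Type*} [Fintype V] [DecidableEq V]
    (E : Finset (V × V)) (m : V → ℝ) (τ : V → V → ℝ)
    (Δt α κ η₁ η₂ θ₁ θ₂ : ℝ) (Ψ₁ Ψ₂ : V → ℝ)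
    (c₁₀ c₂₀ c₁ c₂ μ₁ μ₂ : V → ℝ) : Prop :=
  (∀ K : V,
    m K * (c₁ K - c₁₀ K) / Δt
      + nbrSum E K (fun L =>
          τ K L * (lm (c₁ K) (c₁ L) / η₁ * (μ₁ K + Ψ₁ K - μ₁ L - Ψ₁ L)
            + θ₁ * (c₁ K - c₁ L))) = 0) ∧
  (∀ K : V,
    m K * (c₂ K - c₂₀ K) / Δt
      + nbrSum E K (fun L =>
          τ K L * (lm (c₂ K) (c₂ L) / η₂ * (μ₂ K + Ψ₂ K - μ₂ L - Ψ₂ L)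
            + θ₂ * (c₂ K - c₂ L))) = 0) ∧
  (∀ K : V,
    μ₁ K - μ₂ K
      = α / m K * nbrSum E K (fun L => τ K L * (c₁ K - c₁ L))
        + κ * (1 - 2 * c₁₀ K)) ∧
  (∀ K : V, c₁ K + c₂ K = 1) ∧
  (∑ K : V, m K * (c₁ K * μ₁ K + c₂ K * μ₂ K) = 0)

/-- The discrete energy `𝔈(c)`. -/
noncomputable def discreteEnergy {V : Type*} [Fintype V]
    (E : Finset (V × V)) (m : V → ℝ) (τ : V → V → ℝ)
    (α κ η₁ η₂ θ₁ θ₂ : ℝ) (Ψ₁ Ψ₂ : V → ℝ) (c₁ c₂ : V → ℝ) : ℝ :=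
  α / 2 * edgeSum E (fun K L => τ K L * (c₁ K - c₁ L) ^ 2)
    + ∑ K : V, m K * (κ * c₁ K * c₂ K
        + (c₁ K * Ψ₁ K + θ₁ * η₁ * ent (c₁ K))
        + (c₂ K * Ψ₂ K + θ₂ * η₂ * ent (c₂ K)))

/-- The discrete dissipation `𝔇(c, μ)`. -/
noncomputable def discreteDissipation {V : Type*}
    (E : Finset (V × V)) (τ : V → V → ℝ)
    (η₁ η₂ θ₁ θ₂ : ℝ) (Ψ₁ Ψ₂ : V → ℝ) (c₁ c₂ μ₁ μ₂ : V → ℝ) : ℝ :=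
  edgeSum E (fun K L => τ K L * (lm (c₁ K) (c₁ L) / η₁)
      * (μ₁ K + Ψ₁ K + θ₁ * η₁ * Real.log (c₁ K)
          - μ₁ L - Ψ₁ L - θ₁ * η₁ * Real.log (c₁ L)) ^ 2)
  + edgeSum E (fun K L => τ K L * (lm (c₂ K) (c₂ L) / η₂)
      * (μ₂ K + Ψ₂ K + θ₂ * η₂ * Real.log (c₂ K)
          - μ₂ L - Ψ₂ L - θ₂ * η₂ * Real.log (c₂ L)) ^ 2)

lemma lm_symm (a b : ℝ) : lm a b = lm b a := by
  unfold lm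
  rcases eq_or_ne a b with h | h
  · simp [h]
  · rw [if_neg (fun hh => h hh.1),
      if_neg (show ¬(b = a ∧ 0 ≤ b) from fun hh => h hh.1.symm), min_comm]
    split_ifs with h2
    · rfl
    · rw [show b - a = -(a - b) by ring,
        show Real.log b - Real.log a = -(Real.log a - Real.log b) by ring, neg_div_neg_eq]

lemma lm_nonneg {a b : ℝ} (ha : 0 < a) (hb : 0 < b) : 0 ≤ lm a b := by
  unfold lm
  split_ifs with h1 h2
  · exact ha.le
  · exact le_refl 0
  · rcases (show a ≠ b from fun h => h1 ⟨h, ha.le⟩).lt_or_gt with h | h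
    · have hl : Real.log a < Real.log b := Real.log_lt_log ha h
      exact div_nonneg_iff.2 (Or.inr ⟨by linarith, by linarith⟩)
    · have hl : Real.log b < Real.log a := Real.log_lt_log hb h
      exact div_nonneg (by linarith) (by linarith)

lemma lm_mul_log {a b : ℝ} (ha : 0 < a) (hb : 0 < b) :
    lm a b * (Real.log a - Real.log b) = a - b := by
  unfold lm
  split_ifs with h1 h2
  · rw [h1.1]; ring
  · exact absurd (lt_min ha hb) (not_lt.2 h2)
  · have hab : a ≠ b := fun h => h1 ⟨h, ha.le⟩
    have hlog : Real.log a ≠ Real.log b := by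
      rcases hab.lt_or_gt with h | h
      · exact (Real.log_lt_log ha h).ne
      · exact (Real.log_lt_log hb h).ne'
    rw [div_mul_cancel₀ _ (sub_ne_zero.2 hlog)]

lemma sum_nbrSum {V : Type*} [Fintype V] [DecidableEq V] (E : Finset (V × V))
    (g : V → V → ℝ) :
    ∑ K, nbrSum E K (fun L => g K L) = ∑ p ∈ E, g p.1 p.2 := by
  unfold nbrSum
  simp_rw [Finset.sum_filter]
  rw [← Fintype.sum_prod_type']
  simp_rw [Prod.mk.eta]
  rw [Finset.sum_ite_mem, Finset.univ_inter]

lemma sum_edge_swap {V : Type*} [DecidableEq V] (E : Finset (V × V))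
    (hEsym : ∀ K L : V, (K, L) ∈ E ↔ (L, K) ∈ E) (f : V → V → ℝ) :
    ∑ p ∈ E, f p.1 p.2 = ∑ p ∈ E, f p.2 p.1 := by
  have himg : E.image Prod.swap = E := by
    ext p
    obtain ⟨x, y⟩ := p
    constructor
    · rintro hp
      obtain ⟨⟨a, b⟩, hq, hs⟩ := Finset.mem_image.1 hp
      obtain ⟨rfl, rfl⟩ : b = x ∧ a = y := by
        simpa [Prod.ext_iff, Prod.swap] using hs
      exact (hEsym _ _).1 hq
    · intro hp
      exact Finset.mem_image.2 ⟨(y, x), (hEsym x y).1 hp, rfl⟩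
  calc ∑ p ∈ E, f p.1 p.2 = ∑ p ∈ E.image Prod.swap, f p.1 p.2 := by rw [himg]
    _ = ∑ p ∈ E, f p.2 p.1 :=
      Finset.sum_image (fun x _ y _ h => Prod.swap_injective h)

lemma edge_pair {V : Type*} [Fintype V] [DecidableEq V] (E : Finset (V × V))
    (hEsym : ∀ K L : V, (K, L) ∈ E ↔ (L, K) ∈ E)
    (g : V → V → ℝ) (hg : ∀ K L, g K L = - g L K) (w : V → ℝ) :
    ∑ p ∈ E, w p.1 * g p.1 p.2 = (∑ p ∈ E, (w p.1 - w p.2) * g p.1 p.2) / 2 := by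
  have h1 : ∑ p ∈ E, w p.1 * g p.1 p.2 = ∑ p ∈ E, w p.2 * g p.2 p.1 :=
    sum_edge_swap E hEsym (fun K L => w K * g K L)
  have h2 : ∑ p ∈ E, w p.2 * g p.2 p.1 = -∑ p ∈ E, w p.2 * g p.1 p.2 := by
    rw [← Finset.sum_neg_distrib]
    exact Finset.sum_congr rfl fun p _ => by rw [hg p.2 p.1]; ring
  have h3 : ∑ p ∈ E, (w p.1 - w p.2) * g p.1 p.2
      = ∑ p ∈ E, w p.1 * g p.1 p.2 - ∑ p ∈ E, w p.2 * g p.1 p.2 := by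
    rw [← Finset.sum_sub_distrib]
    exact Finset.sum_congr rfl fun p _ => by ring
  linarith

lemma ent_nonneg {c : ℝ} (hc : 0 ≤ c) : 0 ≤ ent c := by
  rcases eq_or_lt_of_le hc with h | h
  · simp [ent, ← h]
  · have hl := Real.log_le_sub_one_of_pos (one_div_pos.2 h)
    rw [one_div, Real.log_inv] at hl
    have h2 : c * (-Real.log c) ≤ c * (c⁻¹ - 1) := mul_le_mul_of_nonneg_left hl h.le
    have h3 : c * c⁻¹ = 1 := mul_inv_cancel₀ h.ne'
    unfold ent; nlinarith

lemma ent_convex {c c0 : ℝ} (hc : 0 < c) (hc0 : 0 ≤ c0) :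
    ent c - ent c0 ≤ Real.log c * (c - c0) := by
  rcases eq_or_lt_of_le hc0 with h | h
  · rw [← h]
    unfold ent
    simp [Real.log_zero]
    nlinarith [hc.le]
  · have h1 := Real.log_le_sub_one_of_pos (div_pos hc h)
    rw [Real.log_div hc.ne' h.ne'] at h1
    have h2 : c0 * (Real.log c - Real.log c0) ≤ c0 * (c / c0 - 1) :=
      mul_le_mul_of_nonneg_left h1 h.le
    have h3 : c0 * (c / c0 - 1) = c - c0 := by field_simp
    unfold ent
    nlinarith

lemma phase_sum {V : Type*} [Fintype V] [DecidableEq V]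
    (E : Finset (V × V)) (m : V → ℝ) (τ : V → V → ℝ)
    (Δt η θ : ℝ) (Ψ : V → ℝ) (c₀ c μ : V → ℝ)
    (hEsym : ∀ K L : V, (K, L) ∈ E ↔ (L, K) ∈ E)
    (hτpos : ∀ K L, (K, L) ∈ E → 0 < τ K L)
    (hτsym : ∀ K L, τ K L = τ L K)
    (hΔt : 0 < Δt) (hη : 0 < η) (hcpos : ∀ K, 0 < c K)
    (heq : ∀ K, m K * (c K - c₀ K) / Δt
      + nbrSum E K (fun L => τ K L * (lm (c K) (c L) / η * (μ K + Ψ K - μ L - Ψ L)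
            + θ * (c K - c L))) = 0) :
    ∑ K, m K * (c K - c₀ K) * (μ K + Ψ K + θ * η * Real.log (c K)) ≤ 0 := by
  set w : V → ℝ := fun K => μ K + Ψ K + θ * η * Real.log (c K) with hw
  set g : V → V → ℝ := fun K L => τ K L * (lm (c K) (c L) / η) * (w K - w L) with hgdef
  have hg : ∀ K L, g K L = - g L K := by
    intro K L
    simp only [hgdef]
    rw [hτsym L K, lm_symm (c L) (c K)]
    ring
  have hpt : ∀ K L, τ K L * (lm (c K) (c L) / η * (μ K + Ψ K - μ L - Ψ L)
      + θ * (c K - c L)) = g K L := by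
    intro K L
    have hll := lm_mul_log (hcpos K) (hcpos L)
    have key : lm (c K) (c L) / η * (θ * η * (Real.log (c K) - Real.log (c L)))
        = θ * (c K - c L) := by
      rw [show lm (c K) (c L) / η * (θ * η * (Real.log (c K) - Real.log (c L)))
          = θ * (η / η) * (lm (c K) (c L) * (Real.log (c K) - Real.log (c L))) from by ring,
        div_self hη.ne', hll]
      ring
    simp only [hgdef, hw]
    linear_combination (-(τ K L)) * key
  have e1 : ∀ K, (m K * (c K - c₀ K) / Δt) * w K
      + nbrSum E K (fun L => w K * g K L) = 0 := by
    intro K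
    have e2 : nbrSum E K (fun L => w K * g K L)
        = w K * nbrSum E K (fun L => τ K L * (lm (c K) (c L) / η
            * (μ K + Ψ K - μ L - Ψ L) + θ * (c K - c L))) := by
      unfold nbrSum
      rw [Finset.mul_sum]
      exact Finset.sum_congr rfl fun L _ => by rw [hpt K L]
    rw [e2]
    linear_combination (w K) * heq K
  have hsum : ∑ K, (m K * (c K - c₀ K) / Δt) * w K
      + ∑ p ∈ E, w p.1 * g p.1 p.2 = 0 := by
    rw [← sum_nbrSum E (fun K L => w K * g K L), ← Finset.sum_add_distrib]
    exact Finset.sum_eq_zero fun K _ => e1 K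
  have hD : 0 ≤ ∑ p ∈ E, w p.1 * g p.1 p.2 := by
    rw [edge_pair E hEsym g hg w]
    apply div_nonneg _ (by norm_num)
    apply Finset.sum_nonneg
    intro p hp
    have h1 : (w p.1 - w p.2) * g p.1 p.2
        = τ p.1 p.2 * (lm (c p.1) (c p.2) / η) * (w p.1 - w p.2) ^ 2 := by
      simp only [hgdef]; ring
    rw [h1]
    have hτp := hτpos p.1 p.2 (by simpa using hp)
    exact mul_nonneg (mul_nonneg hτp.le
      (div_nonneg (lm_nonneg (hcpos _) (hcpos _)) hη.le)) (sq_nonneg _)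
  have hX : ∑ K, (m K * (c K - c₀ K) / Δt) * w K
      = (∑ K, m K * (c K - c₀ K) * w K) / Δt := by
    rw [Finset.sum_div]
    exact Finset.sum_congr rfl fun K _ => by ring
  rw [hX] at hsum
  have hle : (∑ K, m K * (c K - c₀ K) * w K) / Δt ≤ 0 := by linarith
  rcases div_nonpos_iff.mp hle with ⟨h1, h2⟩ | ⟨h1, h2⟩
  · linarith
  · exact h1

/-- Discrete L∞-H¹ estimate on the volume fractions. -/
theorem LinfH1_estimate_one_step
    {V : Type*} [Fintype V] [DecidableEq V] [Nonempty V]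
    (E : Finset (V × V)) (m : V → ℝ) (τ : V → V → ℝ)
    (Δt α κ η₁ η₂ θ₁ θ₂ : ℝ) (Ψ₁ Ψ₂ : V → ℝ)
    (c₁₀ c₂₀ c₁ c₂ μ₁ μ₂ : V → ℝ)
    (hEirr : ∀ K : V, (K, K) ∉ E)
    (hEsym : ∀ K L : V, (K, L) ∈ E ↔ (L, K) ∈ E)
    (hconn : (SimpleGraph.fromRel (fun K L : V => (K, L) ∈ E)).Connected)
    (hm : ∀ K, 0 < m K)
    (hτpos : ∀ K L, (K, L) ∈ E → 0 < τ K L)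
    (hτsym : ∀ K L, τ K L = τ L K)
    (hΔt : 0 < Δt) (hα : 0 < α) (hκ : 0 < κ)
    (hη₁ : 0 < η₁) (hη₂ : 0 < η₂) (hθ₁ : 0 < θ₁) (hθ₂ : 0 < θ₂)
    (hc₁₀ : ∀ K, c₁₀ K ∈ Set.Icc (0:ℝ) 1)
    (hc₂₀ : ∀ K, c₂₀ K ∈ Set.Icc (0:ℝ) 1)
    (hc₀sum : ∀ K, c₁₀ K + c₂₀ K = 1)
    (hsol : OneStepScheme E m τ Δt α κ η₁ η₂ θ₁ θ₂ Ψ₁ Ψ₂ c₁₀ c₂₀ c₁ c₂ μ₁ μ₂)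
    (hpos : ∀ K : V, (0 < c₁ K ∧ c₁ K < 1) ∧ (0 < c₂ K ∧ c₂ K < 1)) :
    edgeSum E (fun K L => τ K L * (c₁ K - c₁ L) ^ 2)
      ≤ 2 / α * (discreteEnergy E m τ α κ η₁ η₂ θ₁ θ₂ Ψ₁ Ψ₂ c₁₀ c₂₀
          + ((∑ K : V, m K * |Ψ₁ K|) + ∑ K : V, m K * |Ψ₂ K|)) := by
  obtain ⟨heq1, heq2, heq3, heq4, -⟩ := hsol
  have hS1 := phase_sum E m τ Δt η₁ θ₁ Ψ₁ c₁₀ c₁ μ₁ hEsym hτpos hτsym hΔt hη₁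
    (fun K => (hpos K).1.1) heq1
  have hS2 := phase_sum E m τ Δt η₂ θ₂ Ψ₂ c₂₀ c₂ μ₂ hEsym hτpos hτsym hΔt hη₂
    (fun K => (hpos K).2.1) heq2
  -- gradient part
  have hgrad : α / 2 * edgeSum E (fun K L => τ K L * (c₁ K - c₁ L) ^ 2)
      - α / 2 * edgeSum E (fun K L => τ K L * (c₁₀ K - c₁₀ L) ^ 2)
      ≤ α * ∑ K, (c₁ K - c₁₀ K) * nbrSum E K (fun L => τ K L * (c₁ K - c₁ L)) := by
    have h1 : ∑ K, (c₁ K - c₁₀ K) * nbrSum E K (fun L => τ K L * (c₁ K - c₁ L))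
        = ∑ p ∈ E, (c₁ p.1 - c₁₀ p.1) * (τ p.1 p.2 * (c₁ p.1 - c₁ p.2)) := by
      rw [← sum_nbrSum E (fun K L => (c₁ K - c₁₀ K) * (τ K L * (c₁ K - c₁ L)))]
      exact Finset.sum_congr rfl fun K _ => by unfold nbrSum; rw [Finset.mul_sum]
    have h2 := edge_pair E hEsym (fun K L => τ K L * (c₁ K - c₁ L))
      (fun K L => by
        show τ K L * (c₁ K - c₁ L) = -(τ L K * (c₁ L - c₁ K))
        rw [hτsym K L]; ring)
      (fun K => c₁ K - c₁₀ K)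
    have h3 : ∑ p ∈ E, (τ p.1 p.2 * (c₁ p.1 - c₁ p.2) ^ 2
          - τ p.1 p.2 * (c₁₀ p.1 - c₁₀ p.2) ^ 2)
        ≤ ∑ p ∈ E, 2 * (((c₁ p.1 - c₁₀ p.1) - (c₁ p.2 - c₁₀ p.2))
            * (τ p.1 p.2 * (c₁ p.1 - c₁ p.2))) := by
      apply Finset.sum_le_sum
      intro p hp
      have hτp := hτpos p.1 p.2 (by simpa using hp)
      nlinarith [mul_nonneg hτp.le
        (sq_nonneg ((c₁ p.1 - c₁ p.2) - (c₁₀ p.1 - c₁₀ p.2)))]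
    rw [Finset.sum_sub_distrib, ← Finset.mul_sum] at h3
    have eA : edgeSum E (fun K L => τ K L * (c₁ K - c₁ L) ^ 2)
        = (∑ p ∈ E, τ p.1 p.2 * (c₁ p.1 - c₁ p.2) ^ 2) / 2 := rfl
    have eB : edgeSum E (fun K L => τ K L * (c₁₀ K - c₁₀ L) ^ 2)
        = (∑ p ∈ E, τ p.1 p.2 * (c₁₀ p.1 - c₁₀ p.2) ^ 2) / 2 := rfl
    rw [eA, eB, h1, h2]
    have h5 := mul_le_mul_of_nonneg_left h3 hα.le
    linarith
  -- chemical potential part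
  have hTμ : ∑ K, m K * ((c₁ K - c₁₀ K) * μ₁ K + (c₂ K - c₂₀ K) * μ₂ K)
      = α * ∑ K, (c₁ K - c₁₀ K) * nbrSum E K (fun L => τ K L * (c₁ K - c₁ L))
        + κ * ∑ K, m K * ((c₁ K - c₁₀ K) * (1 - 2 * c₁₀ K)) := by
    rw [Finset.mul_sum, Finset.mul_sum, ← Finset.sum_add_distrib]
    apply Finset.sum_congr rfl
    intro K _
    have h3K := heq3 K
    set N := nbrSum E K (fun L => τ K L * (c₁ K - c₁ L)) with hN
    have hm' : m K ≠ 0 := (hm K).ne'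
    have h3K' : m K * (μ₁ K - μ₂ K)
        = α * N + m K * (κ * (1 - 2 * c₁₀ K)) := by
      rw [h3K]
      field_simp
    linear_combination (c₁ K - c₁₀ K) * h3K' + (m K * μ₂ K) * (heq4 K)
      - (m K * μ₂ K) * (hc₀sum K)
  -- κ part
  have hκb : ∑ K, m K * (κ * c₁ K * c₂ K) - ∑ K, m K * (κ * c₁₀ K * c₂₀ K)
      ≤ κ * ∑ K, m K * ((c₁ K - c₁₀ K) * (1 - 2 * c₁₀ K)) := by
    rw [← Finset.sum_sub_distrib, Finset.mul_sum]
    apply Finset.sum_le_sum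
    intro K _
    have hc₂K : c₂ K = 1 - c₁ K := by linarith [heq4 K]
    have hc₂₀K : c₂₀ K = 1 - c₁₀ K := by linarith [hc₀sum K]
    rw [hc₂K, hc₂₀K]
    nlinarith [mul_nonneg (mul_nonneg hκ.le (hm K).le) (sq_nonneg (c₁ K - c₁₀ K))]
  -- entropy parts
  have hent1 : ∑ K, m K * (θ₁ * η₁ * ent (c₁ K)) - ∑ K, m K * (θ₁ * η₁ * ent (c₁₀ K))
      ≤ ∑ K, m K * ((c₁ K - c₁₀ K) * (θ₁ * η₁ * Real.log (c₁ K))) := by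
    rw [← Finset.sum_sub_distrib]
    apply Finset.sum_le_sum
    intro K _
    have hcv := ent_convex (hpos K).1.1 (hc₁₀ K).1
    nlinarith [mul_le_mul_of_nonneg_left hcv
      (mul_nonneg (mul_nonneg (hm K).le hθ₁.le) hη₁.le)]
  have hent2 : ∑ K, m K * (θ₂ * η₂ * ent (c₂ K)) - ∑ K, m K * (θ₂ * η₂ * ent (c₂₀ K))
      ≤ ∑ K, m K * ((c₂ K - c₂₀ K) * (θ₂ * η₂ * Real.log (c₂ K))) := by
    rw [← Finset.sum_sub_distrib]
    apply Finset.sum_le_sum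
    intro K _
    have hcv := ent_convex (hpos K).2.1 (hc₂₀ K).1
    nlinarith [mul_le_mul_of_nonneg_left hcv
      (mul_nonneg (mul_nonneg (hm K).le hθ₂.le) hη₂.le)]
  -- splitting of S₁ + S₂
  have hsplit : (∑ K, m K * (c₁ K - c₁₀ K) * (μ₁ K + Ψ₁ K + θ₁ * η₁ * Real.log (c₁ K)))
      + (∑ K, m K * (c₂ K - c₂₀ K) * (μ₂ K + Ψ₂ K + θ₂ * η₂ * Real.log (c₂ K)))
      = ∑ K, m K * ((c₁ K - c₁₀ K) * μ₁ K + (c₂ K - c₂₀ K) * μ₂ K)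
        + ∑ K, m K * ((c₁ K - c₁₀ K) * Ψ₁ K + (c₂ K - c₂₀ K) * Ψ₂ K)
        + ∑ K, m K * ((c₁ K - c₁₀ K) * (θ₁ * η₁ * Real.log (c₁ K)))
        + ∑ K, m K * ((c₂ K - c₂₀ K) * (θ₂ * η₂ * Real.log (c₂ K))) := by
    rw [← Finset.sum_add_distrib, ← Finset.sum_add_distrib, ← Finset.sum_add_distrib,
      ← Finset.sum_add_distrib]
    exact Finset.sum_congr rfl fun K _ => by ring
  -- Ψ part equality
  have hΨ : ∑ K, m K * ((c₁ K - c₁₀ K) * Ψ₁ K + (c₂ K - c₂₀ K) * Ψ₂ K)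
      = ∑ K, m K * (c₁ K * Ψ₁ K + c₂ K * Ψ₂ K)
        - ∑ K, m K * (c₁₀ K * Ψ₁ K + c₂₀ K * Ψ₂ K) := by
    rw [← Finset.sum_sub_distrib]
    exact Finset.sum_congr rfl fun K _ => by ring
  -- decomposition of the potential part of the energy
  have hsplitE : ∀ a b : V → ℝ,
      ∑ K, m K * (κ * a K * b K + (a K * Ψ₁ K + θ₁ * η₁ * ent (a K))
        + (b K * Ψ₂ K + θ₂ * η₂ * ent (b K)))
      = ∑ K, m K * (κ * a K * b K)
        + ∑ K, m K * (a K * Ψ₁ K + b K * Ψ₂ K)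
        + ∑ K, m K * (θ₁ * η₁ * ent (a K))
        + ∑ K, m K * (θ₂ * η₂ * ent (b K)) := by
    intro a b
    rw [← Finset.sum_add_distrib, ← Finset.sum_add_distrib, ← Finset.sum_add_distrib]
    exact Finset.sum_congr rfl fun K _ => by ring
  -- energy decay
  have hEdec : discreteEnergy E m τ α κ η₁ η₂ θ₁ θ₂ Ψ₁ Ψ₂ c₁ c₂
      ≤ discreteEnergy E m τ α κ η₁ η₂ θ₁ θ₂ Ψ₁ Ψ₂ c₁₀ c₂₀ := by
    unfold discreteEnergy
    rw [hsplitE c₁ c₂, hsplitE c₁₀ c₂₀]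
    linarith
  -- lower bound for the energy
  have hElow : α / 2 * edgeSum E (fun K L => τ K L * (c₁ K - c₁ L) ^ 2)
      - ((∑ K : V, m K * |Ψ₁ K|) + ∑ K : V, m K * |Ψ₂ K|)
      ≤ discreteEnergy E m τ α κ η₁ η₂ θ₁ θ₂ Ψ₁ Ψ₂ c₁ c₂ := by
    unfold discreteEnergy
    have hpw : ∀ K : V, m K * (-|Ψ₁ K| - |Ψ₂ K|)
        ≤ m K * (κ * c₁ K * c₂ K + (c₁ K * Ψ₁ K + θ₁ * η₁ * ent (c₁ K))
          + (c₂ K * Ψ₂ K + θ₂ * η₂ * ent (c₂ K))) := by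
      intro K
      apply mul_le_mul_of_nonneg_left _ (hm K).le
      have b1 : -|Ψ₁ K| ≤ c₁ K * Ψ₁ K := by
        nlinarith [mul_nonneg (hpos K).1.1.le
            (by linarith [neg_abs_le (Ψ₁ K)] : (0:ℝ) ≤ Ψ₁ K + |Ψ₁ K|),
          mul_nonneg (by linarith [(hpos K).1.2] : (0:ℝ) ≤ 1 - c₁ K) (abs_nonneg (Ψ₁ K))]
      have b2 : -|Ψ₂ K| ≤ c₂ K * Ψ₂ K := by
        nlinarith [mul_nonneg (hpos K).2.1.le
            (by linarith [neg_abs_le (Ψ₂ K)] : (0:ℝ) ≤ Ψ₂ K + |Ψ₂ K|),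
          mul_nonneg (by linarith [(hpos K).2.2] : (0:ℝ) ≤ 1 - c₂ K) (abs_nonneg (Ψ₂ K))]
      have b3 : (0:ℝ) ≤ κ * c₁ K * c₂ K :=
        mul_nonneg (mul_nonneg hκ.le (hpos K).1.1.le) (hpos K).2.1.le
      have b4 : (0:ℝ) ≤ θ₁ * η₁ * ent (c₁ K) :=
        mul_nonneg (mul_nonneg hθ₁.le hη₁.le) (ent_nonneg (hpos K).1.1.le)
      have b5 : (0:ℝ) ≤ θ₂ * η₂ * ent (c₂ K) :=
        mul_nonneg (mul_nonneg hθ₂.le hη₂.le) (ent_nonneg (hpos K).2.1.le)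
      linarith
    have hsum := Finset.sum_le_sum (fun K (_ : K ∈ Finset.univ) => hpw K)
    have hL : ∑ K : V, m K * (-|Ψ₁ K| - |Ψ₂ K|)
        = -((∑ K : V, m K * |Ψ₁ K|) + ∑ K : V, m K * |Ψ₂ K|) := by
      rw [← Finset.sum_add_distrib, ← Finset.sum_neg_distrib]
      exact Finset.sum_congr rfl fun K _ => by ring
    rw [hL] at hsum
    linarith
  -- conclusion
  have hfin : α / 2 * edgeSum E (fun K L => τ K L * (c₁ K - c₁ L) ^ 2)
      ≤ discreteEnergy E m τ α κ η₁ η₂ θ₁ θ₂ Ψ₁ Ψ₂ c₁₀ c₂₀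
        + ((∑ K : V, m K * |Ψ₁ K|) + ∑ K : V, m K * |Ψ₂ K|) := by linarith
  have h2α : edgeSum E (fun K L => τ K L * (c₁ K - c₁ L) ^ 2)
      = 2 / α * (α / 2 * edgeSum E (fun K L => τ K L * (c₁ K - c₁ L) ^ 2)) := by
    field_simp
  rw [h2α]
  exact mul_le_mul_of_nonneg_left hfin (by positivity)
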